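/- For all i, j ≥ 1, the generating function G_{ij}(z) = Σ_{n≥0} (L^n)_{ij} z^n of the (i,j) entries of the powers of the infinite Leslie matrix L satisfies z · G_{ij}(z) = 1 − Δ_{ij}(z) · Δ(z)^{-1} in ℂ[[z]]. -/

import Mathlib

/-- Addition of a natural number to a positive natural number,
yielding a positive natural number. -/
def pnatAdd (j : ℕ+) (k : ℕ) : ℕ+ :=
  ⟨(j : ℕ) + k, Nat.lt_of_lt_of_le j.pos (Nat.le_add_right _ _)⟩

/-- The weighted kneading determinant `Δ(z) = 1 − Σ_{n≥0} a_n C_1^n z^{n+1}`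
of the Leslie difference equation, where `C_1^n = ∏_{k=1}^n b_k`.  Its
constant coefficient is `1`, so it is a unit of `ℂ[[z]]` and `Δ(z)⁻¹` is
its genuine inverse. -/
noncomputable def kneadingDet (a : ℕ → ℂ) (b : ℕ+ → ℂ) : PowerSeries ℂ :=
  1 - PowerSeries.X
        * PowerSeries.mk (fun n => a n * ∏ k ∈ Finset.range n, b (pnatAdd 1 k))

/-- The extended weighted kneading matrix `M_{ij}(z)`: the `2 × 2` matrix over
`ℂ[[z]]` with rows `(Σ (R X^n e_1) z^n, Σ (R X^n e_j) z^n)` and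
`(Σ (X^n e_1)_i z^n, Σ (X^n e_j)_i z^n)`. -/
noncomputable def kneadingMatrix
    (X : (ℕ+ →₀ ℂ) →ₗ[ℂ] (ℕ+ →₀ ℂ)) (R : (ℕ+ →₀ ℂ) →ₗ[ℂ] ℂ)
    (i j : ℕ+) : Matrix (Fin 2) (Fin 2) (PowerSeries ℂ) :=
  !![PowerSeries.mk (fun n => R ((X ^ n) (Finsupp.single (1 : ℕ+) 1))),
     PowerSeries.mk (fun n => R ((X ^ n) (Finsupp.single j 1)));
     PowerSeries.mk (fun n => ((X ^ n) (Finsupp.single (1 : ℕ+) 1)) i),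
     PowerSeries.mk (fun n => ((X ^ n) (Finsupp.single j 1)) i)]

/-- The extended weighted kneading determinant `Δ_{ij}(z) = det(I₂ − z M_{ij}(z))`. -/
noncomputable def extKneadingDet
    (X : (ℕ+ →₀ ℂ) →ₗ[ℂ] (ℕ+ →₀ ℂ)) (R : (ℕ+ →₀ ℂ) →ₗ[ℂ] ℂ)
    (i j : ℕ+) : PowerSeries ℂ :=
  Matrix.det (1 - (PowerSeries.X : PowerSeries ℂ) • kneadingMatrix X R i j)

section Proof

variable (a : ℕ → ℂ) (b : ℕ+ → ℂ)
    (L X : (ℕ+ →₀ ℂ) →ₗ[ℂ] (ℕ+ →₀ ℂ))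
    (R : (ℕ+ →₀ ℂ) →ₗ[ℂ] ℂ)

lemma pnatAdd_succ (j : ℕ+) (k : ℕ) : pnatAdd j k + 1 = pnatAdd j (k + 1) := by
  apply PNat.coe_injective
  simp [pnatAdd, PNat.add_coe, PNat.mk_coe, Nat.add_assoc]
  rfl

lemma pnatAdd_one_zero : pnatAdd 1 0 = 1 := by
  apply PNat.coe_injective
  simp [pnatAdd]

lemma Xpow_e1 (hX : ∀ j : ℕ+, X (Finsupp.single j 1) = b j • Finsupp.single (j + 1) 1)
    (n : ℕ) :
    (X ^ n) (Finsupp.single (1 : ℕ+) (1 : ℂ))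
      = (∏ k ∈ Finset.range n, b (pnatAdd 1 k)) • Finsupp.single (pnatAdd 1 n) (1 : ℂ) := by
  induction n with
  | zero => simp [pnatAdd_one_zero]
  | succ n ih =>
    rw [pow_succ', Module.End.mul_apply, ih, map_smul, hX, pnatAdd_succ,
      Finset.prod_range_succ, smul_smul, mul_comm]

end Proof

/-- For the infinite Leslie matrix `L` (with `L e_j = a_{j-1} e_1 + b_j e_{j+1}`),
its subdiagonal part `X` (with `X e_j = b_j e_{j+1}`) and first row `R` (with `R e_j = a_{j-1}`),
and for all `i, j ≥ 1`, the generating function `G_{ij}(z) = Σ_{n≥0} (L^n)_{ij} z^n` satisfies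
`z · G_{ij}(z) = 1 − Δ_{ij}(z) · Δ(z)⁻¹` in `ℂ[[z]]`. -/
theorem leslie_generating_function_kneading
    (a : ℕ → ℂ) (b : ℕ+ → ℂ)
    (L X : (ℕ+ →₀ ℂ) →ₗ[ℂ] (ℕ+ →₀ ℂ))
    (hL : ∀ j : ℕ+, L (Finsupp.single j 1)
        = a ((j : ℕ) - 1) • Finsupp.single (1 : ℕ+) 1
          + b j • Finsupp.single (j + 1) 1)
    (hX : ∀ j : ℕ+, X (Finsupp.single j 1) = b j • Finsupp.single (j + 1) 1)
    (R : (ℕ+ →₀ ℂ) →ₗ[ℂ] ℂ)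
    (hR : ∀ j : ℕ+, R (Finsupp.single j 1) = a ((j : ℕ) - 1))
    (i j : ℕ+) :
    PowerSeries.X * PowerSeries.mk (fun n => ((L ^ n) (Finsupp.single j 1)) i)
      = 1 - extKneadingDet X R i j * (kneadingDet a b)⁻¹ := by
  classical
  -- L = (v ↦ R v • e₁) + X
  have hLX : L = R.smulRight (Finsupp.single (1 : ℕ+) (1 : ℂ)) + X := by
    apply Finsupp.lhom_ext'
    intro k
    apply LinearMap.ext_ring
    simp [hL k, hX k, hR k]
  have hLv : ∀ v : ℕ+ →₀ ℂ, L v = R v • Finsupp.single (1 : ℕ+) (1 : ℂ) + X v := by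
    intro v
    rw [hLX]
    simp
  -- shorthand series
  set U : PowerSeries ℂ :=
    PowerSeries.mk (fun n => R ((X ^ n) (Finsupp.single (1 : ℕ+) 1))) with hU
  set V : PowerSeries ℂ :=
    PowerSeries.mk (fun n => R ((X ^ n) (Finsupp.single j 1))) with hV
  set P : PowerSeries ℂ :=
    PowerSeries.mk (fun n => ((X ^ n) (Finsupp.single (1 : ℕ+) 1)) i) with hP
  set Q : PowerSeries ℂ :=
    PowerSeries.mk (fun n => ((X ^ n) (Finsupp.single j 1)) i) with hQ
  set ρ : PowerSeries ℂ :=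
    PowerSeries.mk (fun n => R ((L ^ n) (Finsupp.single j 1))) with hρ
  set G : PowerSeries ℂ :=
    PowerSeries.mk (fun n => ((L ^ n) (Finsupp.single j 1)) i) with hG
  -- key expansion of Lⁿ eⱼ
  have key : ∀ n : ℕ, (L ^ n) (Finsupp.single j (1 : ℂ))
      = (X ^ n) (Finsupp.single j 1)
        + ∑ k ∈ Finset.range n, (R ((L ^ k) (Finsupp.single j 1))) •
            (X ^ (n - 1 - k)) (Finsupp.single (1 : ℕ+) (1 : ℂ)) := by
    intro n
    induction n with
    | zero => simp
    | succ n ih =>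
      have h1 : (L ^ (n + 1)) (Finsupp.single j (1 : ℂ))
          = L ((L ^ n) (Finsupp.single j 1)) := by
        rw [pow_succ', Module.End.mul_apply]
      have hXih : X ((L ^ n) (Finsupp.single j 1))
          = (X ^ (n + 1)) (Finsupp.single j 1)
            + ∑ k ∈ Finset.range n, (R ((L ^ k) (Finsupp.single j 1))) •
                (X ^ (n - k)) (Finsupp.single (1 : ℕ+) (1 : ℂ)) := by
        rw [ih, map_add, map_sum]
        congr 1
        · rw [pow_succ', Module.End.mul_apply]
        · apply Finset.sum_congr rfl
          intro k hk
          rw [Finset.mem_range] at hk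
          rw [map_smul]
          congr 1
          have hnk : n - k = (n - 1 - k) + 1 := by omega
          rw [hnk, pow_succ', Module.End.mul_apply]
      rw [h1, hLv, hXih, Finset.sum_range_succ]
      simp only [Nat.add_sub_cancel, Nat.sub_self, pow_zero, Module.End.one_apply]
      abel
  -- ρ = V + X * (U * ρ)
  have H1 : ρ = V + PowerSeries.X * (U * ρ) := by
    ext n
    cases n with
    | zero =>
      simp [hρ, hV, PowerSeries.coeff_zero_eq_constantCoeff]
    | succ n =>
      rw [map_add, PowerSeries.coeff_succ_X_mul, PowerSeries.coeff_mul,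
        Finset.Nat.sum_antidiagonal_eq_sum_range_succ_mk]
      simp only [hρ, hV, hU, PowerSeries.coeff_mk]
      have hk := key (n + 1)
      have := congrArg R hk
      rw [map_add, map_sum] at this
      rw [this]
      congr 1
      simp only [map_smul, smul_eq_mul]
      rw [← Finset.sum_range_reflect (fun k =>
        R ((X ^ k) (Finsupp.single (1:ℕ+) (1:ℂ))) * R ((L ^ (n - k)) (Finsupp.single j 1))) (n+1)]
      apply Finset.sum_congr rfl
      intro k hk'
      rw [Finset.mem_range] at hk'
      have e1 : n + 1 - 1 - k = n - k := by omega
      have e2 : n - (n + 1 - 1 - k) = k := by omega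
      rw [e2, e1, mul_comm]
  -- G = Q + X * (P * ρ)
  have H2 : G = Q + PowerSeries.X * (P * ρ) := by
    ext n
    cases n with
    | zero =>
      simp [hG, hQ, PowerSeries.coeff_zero_eq_constantCoeff]
    | succ n =>
      rw [map_add, PowerSeries.coeff_succ_X_mul, PowerSeries.coeff_mul,
        Finset.Nat.sum_antidiagonal_eq_sum_range_succ_mk]
      simp only [hG, hQ, hP, hρ, PowerSeries.coeff_mk]
      have hk := key (n + 1)
      have := congrArg (fun v : ℕ+ →₀ ℂ => v i) hk
      simp only [Finsupp.add_apply, Finsupp.finset_sum_apply, Finsupp.smul_apply,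
        smul_eq_mul] at this
      rw [this]
      congr 1
      rw [← Finset.sum_range_reflect (fun k =>
        ((X ^ k) (Finsupp.single (1:ℕ+) (1:ℂ))) i * R ((L ^ (n - k)) (Finsupp.single j 1))) (n+1)]
      apply Finset.sum_congr rfl
      intro k hk'
      rw [Finset.mem_range] at hk'
      have e1 : n + 1 - 1 - k = n - k := by omega
      have e2 : n - (n + 1 - 1 - k) = k := by omega
      rw [e2, e1, mul_comm]
  -- Δ = 1 - X * U
  have HΔ : kneadingDet a b = 1 - PowerSeries.X * U := by
    rw [kneadingDet]
    congr 2
    ext n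
    rw [hU, PowerSeries.coeff_mk, PowerSeries.coeff_mk, Xpow_e1 b X hX, map_smul, hR,
      smul_eq_mul]
    have : ((pnatAdd 1 n : ℕ+) : ℕ) - 1 = n := by simp [pnatAdd]
    rw [this, mul_comm]
  -- Δᵢⱼ = Δ (1 - X Q) - (X V)(X P)
  have Hext : extKneadingDet X R i j
      = kneadingDet a b * (1 - PowerSeries.X * Q)
        - (PowerSeries.X * V) * (PowerSeries.X * P) := by
    rw [HΔ, extKneadingDet, kneadingMatrix, Matrix.det_fin_two]
    simp only [Matrix.sub_apply, Matrix.smul_apply, Matrix.one_apply, Matrix.of_apply,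
      Matrix.cons_val', Matrix.cons_val_zero, Matrix.cons_val_one, Matrix.head_cons,
      Matrix.empty_val', Matrix.cons_val_fin_one, Matrix.head_fin_const, smul_eq_mul]
    rw [← hU, ← hV, ← hP, ← hQ]
    norm_num
  -- invertibility of Δ
  have hc : PowerSeries.constantCoeff (kneadingDet a b) ≠ 0 := by
    rw [HΔ]
    simp
  have hinv : kneadingDet a b * (kneadingDet a b)⁻¹ = 1 :=
    PowerSeries.mul_inv_cancel _ hc
  -- ρ = V * Δ⁻¹
  have hρV : ρ = V * (kneadingDet a b)⁻¹ := by
    have h5 : ρ * kneadingDet a b = V := by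
      rw [HΔ]
      linear_combination H1
    calc ρ = ρ * (kneadingDet a b * (kneadingDet a b)⁻¹) := by rw [hinv, mul_one]
    _ = (ρ * kneadingDet a b) * (kneadingDet a b)⁻¹ := by ring
    _ = V * (kneadingDet a b)⁻¹ := by rw [h5]
  rw [Hext, H2, hρV]
  have h6 : kneadingDet a b * (1 - PowerSeries.X * Q) * (kneadingDet a b)⁻¹
      = (1 - PowerSeries.X * Q) := by
    calc kneadingDet a b * (1 - PowerSeries.X * Q) * (kneadingDet a b)⁻¹
        = (1 - PowerSeries.X * Q) * (kneadingDet a b * (kneadingDet a b)⁻¹) := by ring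
      _ = 1 - PowerSeries.X * Q := by rw [hinv, mul_one]
  rw [sub_mul, h6]
  ring
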